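/- (Lubell's identity.) Let N and j be positive integers. Then ∑ 1/(w_1 ⋯ w_j), summed over all j-tuples (w_1,…,w_j) of positive integers with w_1 + ⋯ + w_j ≤ N, equals ∑ 1/(w_1 ⋯ w_j), summed over all j-tuples (w_1,…,w_j) of pairwise distinct positive integers with each w_i ≤ N. This is an identity of rational numbers. -/

import Mathlib

open Finset Function Fin

def Lub (N j : ℕ) : ℚ :=
  ∑ w ∈ (Fintype.piFinset fun _ : Fin j => Finset.Icc 1 N).filter
      (fun w => ∑ i, w i ≤ N), 1 / ∏ i, (w i : ℚ)

lemma keyid {j N : ℕ} (w : Fin (j+1) → ℕ) (hpos : ∀ i, 1 ≤ w i)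
    (hsum : ∑ i, w i = N+1) :
    (1 : ℚ) / ∏ i, (w i : ℚ) =
      (1/(N+1)) * ∑ i : Fin (j+1), 1 / ∏ k : Fin j, (w (i.succAbove k) : ℚ) := by
  have hne : ∀ i, (w i : ℚ) ≠ 0 := fun i => Nat.cast_ne_zero.mpr (by have := hpos i; omega)
  have hP : (∏ x, (w x : ℚ)) ≠ 0 := Finset.prod_ne_zero_iff.mpr fun i _ => hne i
  have h1 : ∀ i : Fin (j+1),
      (1:ℚ) / ∏ k : Fin j, (w (i.succAbove k) : ℚ) = (w i : ℚ) / ∏ x, (w x : ℚ) := by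
    intro i
    have hP' : (∏ k : Fin j, (w (i.succAbove k) : ℚ)) ≠ 0 :=
      Finset.prod_ne_zero_iff.mpr fun k _ => hne _
    rw [Fin.prod_univ_succAbove (fun x => (w x : ℚ)) i]
    field_simp
    exact (div_self (hne i)).symm
  rw [Finset.sum_congr rfl fun i _ => h1 i, ← Finset.sum_div]
  have h2 : (∑ i, (w i : ℚ)) = (N+1 : ℚ) := by
    rw [← Nat.cast_sum, hsum]; push_cast; ring
  rw [h2]
  have hN1 : ((N : ℚ) + 1) ≠ 0 := by positivity
  field_simp

lemma Lub_succ (N j : ℕ) :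
    Lub (N+1) (j+1) = Lub N (j+1) + ((j+1) / (N+1)) * Lub N j := by
  classical
  have hsplit :
      ((Fintype.piFinset fun _ : Fin (j+1) => Finset.Icc 1 (N+1)).filter
        (fun w => ∑ i, w i ≤ N+1)) =
      ((Fintype.piFinset fun _ : Fin (j+1) => Finset.Icc 1 (N+1)).filter
        (fun w => ∑ i, w i ≤ N)) ∪
      ((Fintype.piFinset fun _ : Fin (j+1) => Finset.Icc 1 (N+1)).filter
        (fun w => ∑ i, w i = N+1)) := by
    ext w
    simp only [Finset.mem_filter, Finset.mem_union]
    constructor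
    · rintro ⟨h1, h2⟩
      rcases Nat.lt_or_ge (∑ i, w i) (N+1) with h | h
      · exact Or.inl ⟨h1, by omega⟩
      · exact Or.inr ⟨h1, by omega⟩
    · rintro (⟨h1, h2⟩ | ⟨h1, h2⟩) <;> exact ⟨h1, by omega⟩
  have hdisj : Disjoint
      ((Fintype.piFinset fun _ : Fin (j+1) => Finset.Icc 1 (N+1)).filter
        (fun w => ∑ i, w i ≤ N))
      ((Fintype.piFinset fun _ : Fin (j+1) => Finset.Icc 1 (N+1)).filter
        (fun w => ∑ i, w i = N+1)) := by
    rw [Finset.disjoint_left]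
    intro w hw hw'
    simp only [Finset.mem_filter] at hw hw'
    omega
  rw [Lub, hsplit, Finset.sum_union hdisj]
  congr 1
  · rw [Lub]
    apply Finset.sum_congr _ (fun _ _ => rfl)
    ext w
    simp only [Finset.mem_filter, Fintype.mem_piFinset, Finset.mem_Icc]
    constructor
    · rintro ⟨h1, h2⟩
      refine ⟨fun i => ?_, h2⟩
      have hle : w i ≤ ∑ k, w k :=
        Finset.single_le_sum (fun k _ => Nat.zero_le _) (Finset.mem_univ i)
      have := h1 i; omega
    · rintro ⟨h1, h2⟩
      exact ⟨fun i => by have := h1 i; omega, h2⟩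
  · -- second piece
    have hmem : ∀ w ∈ ((Fintype.piFinset fun _ : Fin (j+1) => Finset.Icc 1 (N+1)).filter
        (fun w => ∑ i, w i = N+1)), (∀ i, 1 ≤ w i) ∧ ∑ i, w i = N+1 := by
      intro w hw
      simp only [Finset.mem_filter, Fintype.mem_piFinset, Finset.mem_Icc] at hw
      exact ⟨fun i => (hw.1 i).1, hw.2⟩
    rw [Finset.sum_congr rfl fun w hw => keyid w (hmem w hw).1 (hmem w hw).2,
      ← Finset.mul_sum, Finset.sum_comm]
    have hfix : ∀ i : Fin (j+1),
        ∑ w ∈ ((Fintype.piFinset fun _ : Fin (j+1) => Finset.Icc 1 (N+1)).filter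
          (fun w => ∑ i, w i = N+1)),
          (1:ℚ) / ∏ k : Fin j, (w (i.succAbove k) : ℚ) = Lub N j := by
      intro i
      rw [Lub]
      refine Finset.sum_nbij' (fun w => Fin.removeNth i w)
        (fun v => Fin.insertNth i (N+1 - ∑ k, v k) v) ?_ ?_ ?_ ?_ ?_
      · intro w hw
        simp only [Finset.mem_filter, Fintype.mem_piFinset, Finset.mem_Icc] at hw ⊢
        obtain ⟨h1, h2⟩ := hw
        have hsplitsum : w i + ∑ k : Fin j, w (i.succAbove k) = N+1 := by
          rw [← h2]; exact (Fin.sum_univ_succAbove w i).symm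
        have hwi := h1 i
        constructor
        · intro k
          have hk1 := h1 (i.succAbove k)
          have hle : w (i.succAbove k) ≤ ∑ m : Fin j, w (i.succAbove m) :=
            Finset.single_le_sum (f := fun m => w (i.succAbove m))
              (fun m _ => Nat.zero_le _) (Finset.mem_univ k)
          unfold Fin.removeNth
          omega
        · unfold Fin.removeNth
          omega
      · intro v hv
        simp only [Finset.mem_filter, Fintype.mem_piFinset, Finset.mem_Icc] at hv ⊢
        obtain ⟨h1, h2⟩ := hv
        have hx : 1 ≤ N+1 - ∑ k, v k ∧ N+1 - ∑ k, v k ≤ N+1 := by omega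
        constructor
        · intro a
          by_cases ha : a = i
          · rw [ha, Fin.insertNth_apply_same]; omega
          · obtain ⟨k, hk⟩ := Fin.exists_succAbove_eq ha
            rw [← hk, Fin.insertNth_apply_succAbove]
            have := h1 k; omega
        · rw [Fin.sum_univ_succAbove _ i, Fin.insertNth_apply_same]
          have : ∀ k : Fin j, Fin.insertNth (α := fun _ => ℕ) i (N+1 - ∑ k, v k) v
              (i.succAbove k) = v k :=
            fun k => Fin.insertNth_apply_succAbove (α := fun _ => ℕ) i _ _ k
          rw [Finset.sum_congr rfl fun k _ => this k]
          have hsv : Finset.univ.sum v = ∑ k : Fin j, v k := rfl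
          omega
      · intro w hw
        simp only [Finset.mem_filter, Fintype.mem_piFinset, Finset.mem_Icc] at hw
        obtain ⟨h1, h2⟩ := hw
        have hsplitsum : w i + ∑ k : Fin j, w (i.succAbove k) = N+1 := by
          rw [← h2]; exact (Fin.sum_univ_succAbove w i).symm
        have hrem : ∑ k, Fin.removeNth i w k = N+1 - w i := by
          unfold Fin.removeNth; omega
        show Fin.insertNth i (N+1 - ∑ k, Fin.removeNth i w k) (Fin.removeNth i w) = w
        rw [hrem]
        have hwi : w i ≤ N+1 := by have := h1 i; omega
        have : N+1 - (N+1 - w i) = w i := by omega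
        rw [this]
        exact Fin.insertNth_self_removeNth i w
      · intro v hv
        exact Fin.removeNth_insertNth (α := fun _ => ℕ) i _ v
      · intro w hw
        rfl
    rw [Finset.sum_congr rfl fun i _ => hfix i, Finset.sum_const, Finset.card_univ,
      Fintype.card_fin, nsmul_eq_mul]
    push_cast
    ring

def Rub (N j : ℕ) : ℚ :=
  ∑ w ∈ (Fintype.piFinset fun _ : Fin j => Finset.Icc 1 N).filter
      (fun w => Function.Injective w), 1 / ∏ i, (w i : ℚ)

lemma insertNth_injective {j N : ℕ} (i : Fin (j+1)) (v : Fin j → ℕ)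
    (hv : Function.Injective v) (hb : ∀ k, v k ≤ N) :
    Function.Injective (Fin.insertNth i (N+1) v) := by
  intro a b hab
  by_cases ha : a = i
  · by_cases hb' : b = i
    · rw [ha, hb']
    · exfalso
      obtain ⟨k, hk⟩ := Fin.exists_succAbove_eq hb'
      rw [ha, Fin.insertNth_apply_same, ← hk, Fin.insertNth_apply_succAbove] at hab
      have := hb k; omega
  · obtain ⟨k, hk⟩ := Fin.exists_succAbove_eq ha
    by_cases hb' : b = i
    · exfalso
      rw [hb', Fin.insertNth_apply_same, ← hk, Fin.insertNth_apply_succAbove] at hab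
      have := hb k; omega
    · obtain ⟨k', hk'⟩ := Fin.exists_succAbove_eq hb'
      rw [← hk, ← hk', Fin.insertNth_apply_succAbove, Fin.insertNth_apply_succAbove] at hab
      rw [← hk, ← hk', hv hab]

lemma Rub_succ (N j : ℕ) :
    Rub (N+1) (j+1) = Rub N (j+1) + ((j+1) / (N+1)) * Rub N j := by
  classical
  have hsplit :
      ((Fintype.piFinset fun _ : Fin (j+1) => Finset.Icc 1 (N+1)).filter
        (fun w => Function.Injective w)) =
      ((Fintype.piFinset fun _ : Fin (j+1) => Finset.Icc 1 (N+1)).filter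
        (fun w => Function.Injective w ∧ ∀ i, w i ≠ N+1)) ∪
      ((Fintype.piFinset fun _ : Fin (j+1) => Finset.Icc 1 (N+1)).filter
        (fun w => Function.Injective w ∧ ∃ i, w i = N+1)) := by
    ext w
    simp only [Finset.mem_filter, Finset.mem_union]
    constructor
    · rintro ⟨h1, h2⟩
      by_cases h : ∀ i, w i ≠ N+1
      · exact Or.inl ⟨h1, h2, h⟩
      · push_neg at h
        exact Or.inr ⟨h1, h2, h⟩
    · rintro (⟨h1, h2, -⟩ | ⟨h1, h2, -⟩) <;> exact ⟨h1, h2⟩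
  have hdisj : Disjoint
      ((Fintype.piFinset fun _ : Fin (j+1) => Finset.Icc 1 (N+1)).filter
        (fun w => Function.Injective w ∧ ∀ i, w i ≠ N+1))
      ((Fintype.piFinset fun _ : Fin (j+1) => Finset.Icc 1 (N+1)).filter
        (fun w => Function.Injective w ∧ ∃ i, w i = N+1)) := by
    rw [Finset.disjoint_left]
    intro w hw hw'
    simp only [Finset.mem_filter] at hw hw'
    obtain ⟨i, hi⟩ := hw'.2.2
    exact hw.2.2 i hi
  rw [Rub, hsplit, Finset.sum_union hdisj]
  congr 1
  · rw [Rub]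
    apply Finset.sum_congr _ (fun _ _ => rfl)
    ext w
    simp only [Finset.mem_filter, Fintype.mem_piFinset, Finset.mem_Icc]
    constructor
    · rintro ⟨h1, h2, h3⟩
      exact ⟨fun i => by have := h1 i; have := h3 i; omega, h2⟩
    · rintro ⟨h1, h2⟩
      exact ⟨fun i => by have := h1 i; omega, h2, fun i => by have := h1 i; omega⟩
  · have key : ∑ p ∈ (Finset.univ : Finset (Fin (j+1))) ×ˢ
          ((Fintype.piFinset fun _ : Fin j => Finset.Icc 1 N).filter
            (fun w => Function.Injective w)),
        (1 : ℚ) / ((N+1) * ∏ k, (p.2 k : ℚ)) =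
      ∑ w ∈ ((Fintype.piFinset fun _ : Fin (j+1) => Finset.Icc 1 (N+1)).filter
        (fun w => Function.Injective w ∧ ∃ i, w i = N+1)), 1 / ∏ i, (w i : ℚ) := by
      refine Finset.sum_bij (fun p _ => Fin.insertNth p.1 (N+1) p.2) ?_ ?_ ?_ ?_
      · rintro ⟨i, v⟩ hp
        simp only [Finset.mem_product, Finset.mem_filter, Fintype.mem_piFinset,
          Finset.mem_Icc] at hp ⊢
        obtain ⟨-, hv, hinj⟩ := hp
        refine ⟨?_, insertNth_injective i v hinj (fun k => (hv k).2), i,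
          Fin.insertNth_apply_same ..⟩
        intro a
        by_cases ha : a = i
        · rw [ha, Fin.insertNth_apply_same]; omega
        · obtain ⟨k, hk⟩ := Fin.exists_succAbove_eq ha
          rw [← hk, Fin.insertNth_apply_succAbove]
          have := hv k; omega
      · rintro ⟨i, v⟩ hp ⟨i', v'⟩ hp' heq
        simp only [Finset.mem_product, Finset.mem_filter, Fintype.mem_piFinset,
          Finset.mem_Icc] at hp hp'
        dsimp only at heq
        have hw : Function.Injective (Fin.insertNth i (N+1) v) :=
          insertNth_injective i v hp.2.2 (fun k => (hp.2.1 k).2)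
        have hii' : i = i' := by
          apply hw
          rw [Fin.insertNth_apply_same, heq, Fin.insertNth_apply_same]
        subst hii'
        have hvv' : v = v' := by
          have := congrArg (Fin.removeNth i) heq
          rwa [Fin.removeNth_insertNth, Fin.removeNth_insertNth] at this
        simp [hvv']
      · intro w hw
        simp only [Finset.mem_filter, Fintype.mem_piFinset, Finset.mem_Icc] at hw
        obtain ⟨hmem, hinj, i, hi⟩ := hw
        refine ⟨⟨i, Fin.removeNth i w⟩, ?_, ?_⟩
        · simp only [Finset.mem_product, Finset.mem_filter, Fintype.mem_piFinset,
            Finset.mem_Icc, Finset.mem_univ, true_and]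
          refine ⟨fun k => ?_, hinj.comp (Fin.succAbove_right_injective)⟩
          have h1 := hmem (i.succAbove k)
          have h2 : w (i.succAbove k) ≠ N+1 := by
            rw [← hi]
            intro h
            exact Fin.succAbove_ne i k (hinj h)
          unfold Fin.removeNth
          omega
        · show Fin.insertNth i (N+1) (Fin.removeNth i w) = w
          rw [← hi]
          exact Fin.insertNth_self_removeNth i w
      · rintro ⟨i, v⟩ hp
        dsimp only
        set w : Fin (j+1) → ℕ := Fin.insertNth i (N+1) v with hw
        rw [Fin.prod_univ_succAbove (fun x => ((w x : ℕ) : ℚ)) i]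
        have h1 : w i = N+1 := Fin.insertNth_apply_same ..
        have h2 : ∀ k, w (i.succAbove k) = v k := fun k => Fin.insertNth_apply_succAbove ..
        simp only [h1, h2]
        push_cast
        ring
    rw [← key, Finset.sum_product]
    have inner : ∀ x : Fin (j+1),
        ∑ y ∈ ((Fintype.piFinset fun _ : Fin j => Finset.Icc 1 N).filter
            (fun w => Function.Injective w)),
          (1 : ℚ) / ((N+1) * ∏ k, (y k : ℚ)) =
        (1/(N+1)) * Rub N j := by
      intro x
      rw [Rub, Finset.mul_sum]
      apply Finset.sum_congr rfl
      intro y _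
      rw [div_mul_div_comm, one_mul]
    refine Eq.trans (Finset.sum_congr rfl fun x _ => inner x) ?_
    rw [Finset.sum_const, Finset.card_univ, Fintype.card_fin, nsmul_eq_mul]
    push_cast
    ring
lemma Lub_j0 (N : ℕ) : Lub N 0 = 1 := by simp [Lub]

lemma Rub_j0 (N : ℕ) : Rub N 0 = 1 := by simp [Rub, Function.Injective]

lemma Lub_N0 (j : ℕ) : Lub 0 (j+1) = 0 := by
  rw [Lub]
  apply Finset.sum_eq_zero
  intro w hw
  simp only [Finset.mem_filter, Fintype.mem_piFinset, Finset.mem_Icc] at hw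
  have := (hw.1 0)
  omega

lemma Rub_N0 (j : ℕ) : Rub 0 (j+1) = 0 := by
  rw [Rub]
  apply Finset.sum_eq_zero
  intro w hw
  simp only [Finset.mem_filter, Fintype.mem_piFinset, Finset.mem_Icc] at hw
  have := (hw.1 0)
  omega

lemma Lub_eq_Rub : ∀ N j, Lub N j = Rub N j := by
  intro N
  induction N with
  | zero =>
    intro j
    cases j with
    | zero => rw [Lub_j0, Rub_j0]
    | succ j => rw [Lub_N0, Rub_N0]
  | succ N ih =>
    intro j
    cases j with
    | zero => rw [Lub_j0, Rub_j0]
    | succ j => rw [Lub_succ, Rub_succ, ih, ih]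

/-- Lubell's identity: the sum of `1/(w₁⋯w_j)` over `j`-tuples of positive integers with
`w₁+⋯+w_j ≤ N` equals the sum of `1/(w₁⋯w_j)` over `j`-tuples of pairwise distinct
positive integers bounded by `N`. -/
theorem lubell_identity (N j : ℕ) (hN : 0 < N) (hj : 0 < j) :
    ∑ w ∈ (Fintype.piFinset fun _ : Fin j => Finset.Icc 1 N).filter
        (fun w => ∑ i, w i ≤ N),
      1 / ∏ i, (w i : ℚ) =
    ∑ w ∈ (Fintype.piFinset fun _ : Fin j => Finset.Icc 1 N).filter
        (fun w => Function.Injective w),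
      1 / ∏ i, (w i : ℚ) := by
  exact Lub_eq_Rub N j
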